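/- The disjoint union of two triangles K_3 ⊔ K_3 has signless Laplacian characteristic polynomial (X − 4)^2·(X − 1)^4 (so its largest signless Laplacian eigenvalue equals n − 2 = 4 with multiplicity 2), yet its complement is connected; hence the hypothesis q_1(G) > n − 2 cannot be dropped from the join criterion. -/

import Mathlib

open Polynomial Matrix

/-- The Petersen graph: vertices are the 2-element subsets of a 5-element set,
adjacent iff disjoint. -/
def petersen : SimpleGraph {s : Finset (Fin 5) // s.card = 2} where
  Adj a b := Disjoint a.1 b.1
  symm := ⟨fun _ _ h => h.symm⟩
  loopless := ⟨fun a h => by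
    have h2 := a.2
    simp only [disjoint_self, Finset.bot_eq_empty] at h
    simp [h] at h2⟩

instance : DecidableRel petersen.Adj :=
  fun a b => decidable_of_iff (Disjoint a.1 b.1) Iff.rfl

/-- The join of two simple graphs: keep all edges and connect every
vertex of the first graph to every vertex of the second. -/
def SimpleGraph.join {α β : Type*} (G : SimpleGraph α) (H : SimpleGraph β) :
    SimpleGraph (α ⊕ β) where
  Adj u v := match u, v with
    | Sum.inl u, Sum.inl v => G.Adj u v
    | Sum.inr u, Sum.inr v => H.Adj u v
    | _, _ => True
  symm := ⟨fun u v => match u, v with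
    | Sum.inl _, Sum.inl _ => G.adj_symm
    | Sum.inr _, Sum.inr _ => H.adj_symm
    | Sum.inl _, Sum.inr _ | Sum.inr _, Sum.inl _ => fun _ => trivial⟩
  loopless := ⟨fun u => by cases u <;> simp⟩

instance {α β : Type*} (G : SimpleGraph α) (H : SimpleGraph β)
    [DecidableRel G.Adj] [DecidableRel H.Adj] :
    DecidableRel (G.join H).Adj := fun u v =>
  match u, v with
  | Sum.inl u, Sum.inl v => decidable_of_iff (G.Adj u v) Iff.rfl
  | Sum.inr u, Sum.inr v => decidable_of_iff (H.Adj u v) Iff.rfl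
  | Sum.inl _, Sum.inr _ => .isTrue trivial
  | Sum.inr _, Sum.inl _ => .isTrue trivial

/-- The signless Laplacian matrix `Q(G) = D(G) + A(G)` of a graph, over `ℝ`. -/
def signlessLap {V : Type*} [Fintype V] [DecidableEq V] (G : SimpleGraph V)
    [DecidableRel G.Adj] : Matrix V V ℝ :=
  G.degMatrix ℝ + G.adjMatrix ℝ

instance {α β : Type*} (G : SimpleGraph α) (H : SimpleGraph β)
    [DecidableRel G.Adj] [DecidableRel H.Adj] :
    DecidableRel (G ⊕g H).Adj := fun u v =>
  match u, v with
  | Sum.inl u, Sum.inl v => decidable_of_iff (G.Adj u v) Iff.rfl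
  | Sum.inr u, Sum.inr v => decidable_of_iff (H.Adj u v) Iff.rfl
  | Sum.inl _, Sum.inr _ => .isFalse (by simp)
  | Sum.inr _, Sum.inl _ => .isFalse (by simp)

lemma deg_sum_inl {α β : Type*} [Fintype α] [Fintype β] [DecidableEq α] [DecidableEq β]
    (G : SimpleGraph α) (H : SimpleGraph β) [DecidableRel G.Adj] [DecidableRel H.Adj]
    (v : α) : (G ⊕g H).degree (Sum.inl v) = G.degree v := by
  unfold SimpleGraph.degree
  rw [show (G ⊕g H).neighborFinset (Sum.inl v) = (G.neighborFinset v).image Sum.inl by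
    ext w; cases w <;> simp [SimpleGraph.sum_adj]]
  exact Finset.card_image_of_injective _ Sum.inl_injective

lemma deg_sum_inr {α β : Type*} [Fintype α] [Fintype β] [DecidableEq α] [DecidableEq β]
    (G : SimpleGraph α) (H : SimpleGraph β) [DecidableRel G.Adj] [DecidableRel H.Adj]
    (v : β) : (G ⊕g H).degree (Sum.inr v) = H.degree v := by
  unfold SimpleGraph.degree
  rw [show (G ⊕g H).neighborFinset (Sum.inr v) = (H.neighborFinset v).image Sum.inr by
    ext w; cases w <;> simp [SimpleGraph.sum_adj]]
  exact Finset.card_image_of_injective _ Sum.inr_injective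

lemma lap_sum {α β : Type*} [Fintype α] [Fintype β] [DecidableEq α] [DecidableEq β]
    (G : SimpleGraph α) (H : SimpleGraph β) [DecidableRel G.Adj] [DecidableRel H.Adj] :
    signlessLap (G ⊕g H) = Matrix.fromBlocks (signlessLap G) 0 0 (signlessLap H) := by
  ext u v
  cases u <;> cases v <;>
    simp [signlessLap, SimpleGraph.degMatrix, SimpleGraph.sum_adj, deg_sum_inl, deg_sum_inr,
      Matrix.fromBlocks, Matrix.diagonal]
  · convert rfl using 3
    convert (deg_sum_inl G H _).symm
  · convert rfl using 3
    convert (deg_sum_inr G H _).symm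

lemma lap_top3 : signlessLap (⊤ : SimpleGraph (Fin 3)) = !![2,1,1;1,2,1;1,1,2] := by
  ext i j
  fin_cases i <;> fin_cases j <;>
    simp [signlessLap, SimpleGraph.degMatrix, Matrix.vecHead, Matrix.vecTail] <;> norm_num

lemma charpoly_top3 : (signlessLap (⊤ : SimpleGraph (Fin 3))).charpoly
    = (X - C 4) * (X - C 1) ^ 2 := by
  rw [lap_top3, Matrix.charpoly, Matrix.det_fin_three]
  simp [charmatrix_apply, Matrix.one_apply, Matrix.vecHead, Matrix.vecTail, map_ofNat]
  ring

theorem stmt18 :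
    (signlessLap ((⊤ : SimpleGraph (Fin 3)) ⊕g (⊤ : SimpleGraph (Fin 3)))).charpoly =
      (X - C 4) ^ 2 * (X - C 1) ^ 4 ∧
    (((⊤ : SimpleGraph (Fin 3)) ⊕g (⊤ : SimpleGraph (Fin 3)))ᶜ).Connected := by
  
  constructor
  · rw [lap_sum, Matrix.charpoly_fromBlocks_zero₂₁, charpoly_top3]
    ring
  · have key : ∀ u, (((⊤ : SimpleGraph (Fin 3)) ⊕g (⊤ : SimpleGraph (Fin 3)))ᶜ).Reachable
        u (Sum.inl 0) ∨ (((⊤ : SimpleGraph (Fin 3)) ⊕g (⊤ : SimpleGraph (Fin 3)))ᶜ).Reachable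
        u (Sum.inr 0) := by
      intro u
      cases u with
      | inl a =>
        right
        exact SimpleGraph.Adj.reachable (by simp [SimpleGraph.sum_adj])
      | inr b =>
        left
        exact SimpleGraph.Adj.reachable (by simp [SimpleGraph.sum_adj])
    have hlr : (((⊤ : SimpleGraph (Fin 3)) ⊕g (⊤ : SimpleGraph (Fin 3)))ᶜ).Reachable
        (Sum.inl 0) (Sum.inr 0) := SimpleGraph.Adj.reachable (by simp [SimpleGraph.sum_adj])
    constructor
    · intro u v
      rcases key u with hu | hu <;> rcases key v with hv | hv
      · exact hu.trans hv.symm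
      · exact hu.trans (hlr.trans hv.symm)
      · exact hu.trans (hlr.symm.trans hv.symm)
      · exact hu.trans hv.symm
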